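/- The algebra T is spanned as a vector space by the ordered monomials X^α Y^β Z^γ with α, β, γ ∈ ℕ; that is, every element of T is a k-linear combination of such monomials. -/

import Mathlib

open FreeAlgebra

inductive TRel (k : Type) [Field k] (q : k) :
    FreeAlgebra k (Fin 3) → FreeAlgebra k (Fin 3) → Prop where
  | rel1 : TRel k q (ι k 1 * ι k 0)
      (q⁻¹ • (ι k 0 * ι k 1) + (q - q⁻¹) • ι k 2)
  | rel2 : TRel k q (ι k 0 * ι k 2)
      (q⁻¹ • (ι k 2 * ι k 0) + (-(q⁻¹ ^ 3 * (q - q⁻¹))) • ι k 1)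
  | rel3 : TRel k q (ι k 2 * ι k 1)
      (q⁻¹ • (ι k 1 * ι k 2) + (-(q⁻¹ ^ 3 * (q - q⁻¹))) • ι k 0)

namespace TAux

variable (k : Type) [Field k] (q : k)

/-- images of the generators in `T` -/
def g (i : Fin 3) : RingQuot (TRel k q) := RingQuot.mkAlgHom k (TRel k q) (ι k i)

/-- the span of the ordered monomials -/
def S : Submodule k (RingQuot (TRel k q)) :=
  Submodule.span k { w : RingQuot (TRel k q) | ∃ α β γ : ℕ,
    w = g k q 0 ^ α * g k q 1 ^ β * g k q 2 ^ γ }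

variable {k q}

lemma rel1' : g k q 1 * g k q 0 =
    q⁻¹ • (g k q 0 * g k q 1) + (q - q⁻¹) • g k q 2 := by
  have := RingQuot.mkAlgHom_rel k (TRel.rel1 (k := k) (q := q))
  simpa [g, map_mul, map_add, map_smul] using this

lemma rel2' : g k q 0 * g k q 2 =
    q⁻¹ • (g k q 2 * g k q 0) + (-(q⁻¹ ^ 3 * (q - q⁻¹))) • g k q 1 := by
  have := RingQuot.mkAlgHom_rel k (TRel.rel2 (k := k) (q := q))
  simpa only [g, map_mul, map_add, map_smul] using this

lemma rel3' : g k q 2 * g k q 1 =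
    q⁻¹ • (g k q 1 * g k q 2) + (-(q⁻¹ ^ 3 * (q - q⁻¹))) • g k q 0 := by
  have := RingQuot.mkAlgHom_rel k (TRel.rel3 (k := k) (q := q))
  simpa only [g, map_mul, map_add, map_smul] using this

/-- the flipped version of rel2 -/
lemma rel2'' (hq : q ≠ 0) : g k q 2 * g k q 0 =
    q • (g k q 0 * g k q 2) + (q⁻¹ ^ 2 * (q - q⁻¹)) • g k q 1 := by
  have h := rel2' (k := k) (q := q)
  have h2 : q • (g k q 0 * g k q 2)
      = (q * q⁻¹) • (g k q 2 * g k q 0) + (q * -(q⁻¹ ^ 3 * (q - q⁻¹))) • g k q 1 := by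
    rw [h, smul_add, smul_smul, smul_smul]
  rw [mul_inv_cancel₀ hq, one_smul] at h2
  have hc : q * -(q⁻¹ ^ 3 * (q - q⁻¹)) = -(q⁻¹ ^ 2 * (q - q⁻¹)) := by
    field_simp
  rw [hc] at h2
  rw [h2, add_assoc, ← add_smul, neg_add_cancel, zero_smul, add_zero]

/-- inversion count -/
def inv : List (Fin 3) → ℕ
  | [] => 0
  | a :: t => t.countP (fun x => decide (x < a)) + inv t

lemma inv_swap (u : List (Fin 3)) {a b : Fin 3} (hab : a < b) (v : List (Fin 3)) :
    inv (u ++ a :: b :: v) + 1 = inv (u ++ b :: a :: v) := by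
  induction u with
  | nil =>
      simp only [List.nil_append, inv, List.countP_cons, decide_eq_true_eq]
      rw [if_neg (not_lt.2 hab.le), if_pos hab]
      omega
  | cons c u ih =>
      simp only [List.cons_append, inv, List.append_eq]
      have hcount : ∀ p : Fin 3 → Bool,
          (u ++ a :: b :: v).countP p = (u ++ b :: a :: v).countP p := by
        intro p
        simp only [List.countP_append, List.countP_cons]
        omega
      rw [hcount]
      omega

lemma exists_bad : ∀ w : List (Fin 3), ¬ w.Chain' (· ≤ ·) →
    ∃ (u : List (Fin 3)) (a b : Fin 3) (v : List (Fin 3)),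
      w = u ++ b :: a :: v ∧ a < b := by
  intro w
  induction w with
  | nil => intro h; exact absurd List.isChain_nil h
  | cons x t ih =>
      intro h
      match t, ih with
      | [], _ => exact absurd (List.isChain_singleton x) h
      | y :: t', ih =>
          rw [List.Chain', List.isChain_cons_cons] at h
          by_cases hxy : x ≤ y
          · have : ¬ (y :: t').Chain' (· ≤ ·) := fun hc => h ⟨hxy, hc⟩
            obtain ⟨u, a, b, v, heq, hab⟩ := ih this
            exact ⟨x :: u, a, b, v, by simp [heq], hab⟩
          · exact ⟨[], y, x, t', rfl, not_le.1 hxy⟩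

lemma sorted_eq : ∀ w : List (Fin 3), w.Pairwise (· ≤ ·) →
    ∃ α β γ : ℕ, w = List.replicate α 0 ++ List.replicate β 1 ++ List.replicate γ 2 := by
  intro w
  induction w with
  | nil => intro _; exact ⟨0, 0, 0, rfl⟩
  | cons x t ih =>
      intro h
      rw [List.pairwise_cons] at h
      obtain ⟨hle, ht⟩ := h
      obtain ⟨α, β, γ, rfl⟩ := ih ht
      fin_cases x
      · exact ⟨α + 1, β, γ, by simp [List.replicate_succ]⟩
      · have hα : α = 0 := by
          by_contra hα
          have : (0 : Fin 3) ∈ List.replicate α (0 : Fin 3) ++ List.replicate β 1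
              ++ List.replicate γ 2 := by
            simp [List.mem_append, List.mem_replicate, hα]
          exact absurd (hle 0 this) (by decide)
        subst hα
        exact ⟨0, β + 1, γ, by simp [List.replicate_succ]⟩
      · have hα : α = 0 := by
          by_contra hα
          have : (0 : Fin 3) ∈ List.replicate α (0 : Fin 3) ++ List.replicate β 1
              ++ List.replicate γ 2 := by
            simp [List.mem_append, List.mem_replicate, hα]
          exact absurd (hle 0 this) (by decide)
        have hβ : β = 0 := by
          by_contra hβ
          have : (1 : Fin 3) ∈ List.replicate α (0 : Fin 3) ++ List.replicate β 1
              ++ List.replicate γ 2 := by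
            simp [List.mem_append, List.mem_replicate, hβ]
          exact absurd (hle 1 this) (by decide)
        subst hα; subst hβ
        exact ⟨0, 0, γ + 1, by simp [List.replicate_succ]⟩

lemma prod_replicate (α β γ : ℕ) :
    (((List.replicate α (0 : Fin 3) ++ List.replicate β 1 ++ List.replicate γ 2).map
      (g k q)).prod) = g k q 0 ^ α * g k q 1 ^ β * g k q 2 ^ γ := by
  simp [List.map_append, List.prod_append, List.map_replicate, List.prod_replicate, mul_assoc]

lemma prod_append_cons2 (u : List (Fin 3)) (x y : Fin 3) (v : List (Fin 3)) :
    ((u ++ x :: y :: v).map (g k q)).prod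
      = (u.map (g k q)).prod * ((g k q x * g k q y) * (v.map (g k q)).prod) := by
  simp [List.map_append, List.prod_append, mul_assoc]

lemma prod_append_cons1 (u : List (Fin 3)) (e : Fin 3) (v : List (Fin 3)) :
    ((u ++ e :: v).map (g k q)).prod
      = (u.map (g k q)).prod * (g k q e * (v.map (g k q)).prod) := by
  simp [List.map_append, List.prod_append, mul_assoc]

lemma step (u v : List (Fin 3)) (a b e : Fin 3) (s c : k)
    (hrel : g k q b * g k q a = s • (g k q a * g k q b) + c • g k q e)
    (h1 : ((u ++ a :: b :: v).map (g k q)).prod ∈ S k q)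
    (h2 : ((u ++ e :: v).map (g k q)).prod ∈ S k q) :
    ((u ++ b :: a :: v).map (g k q)).prod ∈ S k q := by
  rw [prod_append_cons2, hrel, add_mul, mul_add, smul_mul_assoc, smul_mul_assoc,
    mul_smul_comm, mul_smul_comm]
  rw [prod_append_cons2] at h1
  rw [prod_append_cons1] at h2
  exact Submodule.add_mem _ (Submodule.smul_mem _ _ h1) (Submodule.smul_mem _ _ h2)

lemma mem_S_prod (hq : q ≠ 0) :
    ∀ n m : ℕ, ∀ w : List (Fin 3), w.length ≤ n → inv w ≤ m →
      (w.map (g k q)).prod ∈ S k q := by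
  intro n
  induction n with
  | zero =>
      intro m w hw _
      have : w = [] := List.eq_nil_of_length_eq_zero (Nat.le_zero.1 hw)
      subst this
      exact Submodule.subset_span ⟨0, 0, 0, by simp⟩
  | succ n ihn =>
      intro m
      induction m using Nat.strong_induction_on with
      | _ m ihm =>
          intro w hlen hinv
          by_cases hc : w.Chain' (· ≤ ·)
          · obtain ⟨α, β, γ, rfl⟩ := sorted_eq w (List.isChain_iff_pairwise.1 hc)
            rw [prod_replicate]
            exact Submodule.subset_span ⟨α, β, γ, rfl⟩
          · obtain ⟨u, a, b, v, rfl, hab⟩ := exists_bad _ hc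
            have hlt : inv (u ++ a :: b :: v) < m := by
              have := inv_swap u hab v
              omega
            have hlen1 : (u ++ a :: b :: v).length ≤ n + 1 := by
              simpa using hlen
            have h1 := ihm (inv (u ++ a :: b :: v)) hlt (u ++ a :: b :: v) hlen1 le_rfl
            have hlen2 : ∀ e : Fin 3, (u ++ e :: v).length ≤ n := by
              intro e
              simp only [List.length_append, List.length_cons] at hlen ⊢
              omega
            have h2 := fun e : Fin 3 => ihn (inv (u ++ e :: v)) (u ++ e :: v) (hlen2 e) le_rfl
            -- case on the pair (a, b)
            fin_cases a <;> fin_cases b <;> simp only [Fin.mk_lt_mk] at hab <;>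
              first
              | omega
              | exact step u v _ _ 2 q⁻¹ (q - q⁻¹) rel1' h1 (h2 2)
              | exact step u v _ _ 1 q (q⁻¹ ^ 2 * (q - q⁻¹)) (rel2'' hq) h1 (h2 1)
              | exact step u v _ _ 0 q⁻¹ (-(q⁻¹ ^ 3 * (q - q⁻¹))) rel3' h1 (h2 0)

lemma mul_gen_mem (hq : q ≠ 0) (i : Fin 3) {s : RingQuot (TRel k q)} (hs : s ∈ S k q) :
    g k q i * s ∈ S k q := by
  have hgen : ∀ x ∈ { w : RingQuot (TRel k q) | ∃ α β γ : ℕ,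
      w = g k q 0 ^ α * g k q 1 ^ β * g k q 2 ^ γ }, g k q i * x ∈ S k q := by
    rintro x ⟨α, β, γ, rfl⟩
    have := mem_S_prod hq (1 + α + β + γ)
      (inv (i :: (List.replicate α 0 ++ List.replicate β 1 ++ List.replicate γ 2)))
      (i :: (List.replicate α 0 ++ List.replicate β 1 ++ List.replicate γ 2))
      (by simp [List.length_append]; omega) le_rfl
    rw [List.map_cons, List.prod_cons, prod_replicate] at this
    exact this
  have hmap : Submodule.map (LinearMap.mulLeft k (g k q i)) (S k q) ≤ S k q := by
    rw [S, Submodule.map_span, Submodule.span_le]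
    rintro _ ⟨x, hx, rfl⟩
    exact hgen x hx
  exact hmap ⟨s, hs, rfl⟩

lemma key (hq : q ≠ 0) (a : FreeAlgebra k (Fin 3)) :
    ∀ s ∈ S k q, RingQuot.mkAlgHom k (TRel k q) a * s ∈ S k q := by
  induction a using FreeAlgebra.induction with
  | grade0 r =>
      intro s hs
      rw [AlgHom.commutes]
      simpa [Algebra.smul_def] using Submodule.smul_mem _ r hs
  | grade1 i =>
      intro s hs
      exact mul_gen_mem hq i hs
  | mul a b ha hb =>
      intro s hs
      rw [map_mul, mul_assoc]
      exact ha _ (hb _ hs)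
  | add a b ha hb =>
      intro s hs
      rw [map_add, add_mul]
      exact Submodule.add_mem _ (ha _ hs) (hb _ hs)

end TAux

theorem stmt_1 (k : Type) [Field k] (q : k) (hq : q ≠ 0) (hq2 : q ^ 2 ≠ 1)
    (x : RingQuot (TRel k q)) :
    x ∈ Submodule.span k
      { w : RingQuot (TRel k q) | ∃ α β γ : ℕ,
        w = RingQuot.mkAlgHom k (TRel k q) (ι k 0) ^ α *
            RingQuot.mkAlgHom k (TRel k q) (ι k 1) ^ β *
            RingQuot.mkAlgHom k (TRel k q) (ι k 2) ^ γ } := by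
  obtain ⟨a, rfl⟩ := RingQuot.mkAlgHom_surjective k (TRel k q) x
  have h1 : (1 : RingQuot (TRel k q)) ∈ TAux.S k q :=
    Submodule.subset_span ⟨0, 0, 0, by simp⟩
  have := TAux.key hq a 1 h1
  rw [mul_one] at this
  exact this
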